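/- Let C ⊆ ℱ be a nonempty compact set and let (c_m, d_m) ∈ 𝒫 be such that r_{c_m,d_m}(z) > r_{c,d}(z) for all (c,d) ∈ 𝒫 with (c,d) ≠ (c_m,d_m) and all z ∈ C. Then sup_{z∈C} | P_n(z)/σ^{(n)}_{c_m,d_m}(z) − 1 | → 0 as n → ∞; in particular, there exists N such that for all n ≥ N and all z ∈ C, P_n(z) ≠ 0. -/

import Mathlib

open Filter Topology Set

/-- `σ_{c,d}(z) = exp(2πi m (az+b)/(cz+d)) / (cz+d)^k` with the concrete Bézout choice
`a = gcdB c d`, `b = -gcdA c d` (so that `a*d - b*c = gcd c d = 1` for coprime `c,d`;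
the value is independent of this choice since `m` is an integer). -/
noncomputable def sigmaP (k m : ℕ) (c d : ℤ) (z : ℂ) : ℂ :=
  Complex.exp (2 * Real.pi * Complex.I * (m : ℂ) *
      ((Int.gcdB c d : ℂ) * z - (Int.gcdA c d : ℂ)) / ((c : ℂ) * z + (d : ℂ))) /
    ((c : ℂ) * z + (d : ℂ)) ^ k

/-- The index set `𝒫`: coprime pairs `(c,d)` with `c > 0`, together with `(0,1)`. -/
def Pset : Set (ℤ × ℤ) := {p | (IsCoprime p.1 p.2 ∧ 0 < p.1) ∨ p = (0, 1)}

/-- The Poincaré series `P_{k,m}(z) = Σ_{(c,d)∈𝒫} σ_{c,d}(z)`. -/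
noncomputable def poincareP (k m : ℕ) (z : ℂ) : ℂ :=
  ∑' p : Pset, sigmaP k m p.1.1 p.1.2 z

/-- `r_{c,d}(z) = exp(-2πα · Im z/|cz+d|²)/|cz+d|`. -/
noncomputable def rP (α : ℝ) (c d : ℤ) (z : ℂ) : ℝ :=
  Real.exp (-2 * Real.pi * α * z.im / ‖(c : ℂ) * z + (d : ℂ)‖ ^ 2) /
    ‖(c : ℂ) * z + (d : ℂ)‖

/-- The standard fundamental domain `ℱ` for `SL(2,ℤ)`. -/
noncomputable def Fdom : Set ℂ :=
  {z | 0 < z.im ∧ ((1 < ‖z‖ ∧ z.re ∈ Set.Ioc (-(1/2) : ℝ) (1/2 : ℝ)) ∨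
    (‖z‖ = 1 ∧ Complex.arg z ∈ Set.Icc (Real.pi / 3) (Real.pi / 2)))}

/-- `F(t) = (1/(4π)) · (1/4+t²)·log(1/4+t²) / (t·(t²-3/4))`. -/
noncomputable def Ffun (t : ℝ) : ℝ :=
  (1 / (4 * Real.pi)) * ((1/4 + t^2) * Real.log (1/4 + t^2)) / (t * (t^2 - 3/4))

/-- The arc `𝒜 = {e^{iθ} : θ ∈ [π/3, π/2]}`. -/
noncomputable def arcA : Set ℂ :=
  {z | ∃ θ ∈ Set.Icc (Real.pi / 3) (Real.pi / 2), z = Complex.exp (θ * Complex.I)}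

/-- The segment `ℒ_ρ = {1/2 + ti : t ≥ √3/2}`. -/
noncomputable def lineRho : Set ℂ :=
  {z | ∃ t : ℝ, Real.sqrt 3 / 2 ≤ t ∧ z = 1/2 + t * Complex.I}

/-- The segment `ℒ_i = {ti : t ≥ 1}`. -/
def lineI : Set ℂ := {z | ∃ t : ℝ, 1 ≤ t ∧ z = t * Complex.I}

/-- The curve `Γ_α = {z ∈ ℱ : |z| > 1, 2πα·Im z = log|z|/(1-|z|⁻²)}`. -/
noncomputable def GammaA (α : ℝ) : Set ℂ :=
  {z | z ∈ Fdom ∧ 1 < ‖z‖ ∧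
    2 * Real.pi * α * z.im = Real.log (‖z‖) / (1 - ((‖z‖) ^ 2)⁻¹)}

set_option maxHeartbeats 4000000

lemma czd_ne_zero {c d : ℤ} (h : ¬(c = 0 ∧ d = 0)) {z : ℂ} (hz : 0 < z.im) :
    (c:ℂ) * z + d ≠ 0 := by
  intro h0
  have him : ((c:ℂ)*z + (d:ℂ)).im = (c:ℝ) * z.im := by simp
  rcases eq_or_ne c 0 with hc | hc
  · subst hc
    simp only [Int.cast_zero, zero_mul, zero_add] at h0
    exact h ⟨rfl, by exact_mod_cast h0⟩
  · have h1 : (c:ℝ) * z.im = 0 := by rw [← him, h0, Complex.zero_im]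
    have : (c:ℝ) ≠ 0 := Int.cast_ne_zero.mpr hc
    rcases mul_eq_zero.mp h1 with h2 | h2
    · exact this h2
    · exact (ne_of_gt hz) h2
lemma abs_sigmaP {c d : ℤ} (h : IsCoprime c d) (k mm : ℕ) {z : ℂ} (hz : 0 < z.im) :
    ‖sigmaP k mm c d z‖ =
      Real.exp (-2 * Real.pi * mm * z.im / ‖(c:ℂ)*z + d‖ ^ 2) /
        ‖(c:ℂ)*z + d‖ ^ k := by
  have hcd : ¬(c = 0 ∧ d = 0) := by
    rintro ⟨rfl, rfl⟩; exact not_isCoprime_zero_zero h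
  have hw : (c:ℂ) * z + d ≠ 0 := czd_ne_zero hcd hz
  have hbez : (c:ℝ) * (Int.gcdA c d : ℝ) + (d:ℝ) * (Int.gcdB c d : ℝ) = 1 := by
    have := Int.gcd_eq_gcd_ab c d
    have h1 : Int.gcd c d = 1 := Int.isCoprime_iff_gcd_eq_one.mp h
    rw [h1] at this
    exact_mod_cast this.symm
  rw [sigmaP, norm_div, norm_pow, Complex.norm_exp]
  congr 2
  have hre : (2 * ↑Real.pi * Complex.I * (mm:ℂ) *
      ((Int.gcdB c d : ℂ) * z - (Int.gcdA c d : ℂ)) / ((c:ℂ) * z + (d:ℂ))).re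
      = -(2 * Real.pi * mm) * (((Int.gcdB c d : ℂ) * z - (Int.gcdA c d : ℂ)) / ((c:ℂ) * z + (d:ℂ))).im := by
    have : (2 * ↑Real.pi * Complex.I * (mm:ℂ) *
        ((Int.gcdB c d : ℂ) * z - (Int.gcdA c d : ℂ)) / ((c:ℂ) * z + (d:ℂ)))
        = ((2 * Real.pi * mm : ℝ) : ℂ) * Complex.I *
          (((Int.gcdB c d : ℂ) * z - (Int.gcdA c d : ℂ)) / ((c:ℂ) * z + (d:ℂ))) := by
      push_cast; ring
    rw [this]
    simp [Complex.mul_re, Complex.mul_im]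
  rw [hre]
  have him : (((Int.gcdB c d : ℂ) * z - (Int.gcdA c d : ℂ)) / ((c:ℂ) * z + (d:ℂ))).im
      = z.im / ‖(c:ℂ)*z + d‖ ^ 2 := by
    rw [Complex.div_im]
    have hns : Complex.normSq ((c:ℂ)*z + d) = ‖(c:ℂ)*z+d‖ ^ 2 := Complex.sq_norm _ |>.symm
    rw [hns]
    have h1 : ((Int.gcdB c d : ℂ) * z - (Int.gcdA c d : ℂ)).im = (Int.gcdB c d : ℝ) * z.im := by simp
    have h2 : ((c:ℂ) * z + (d:ℂ)).re = (c:ℝ) * z.re + (d:ℝ) := by simp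
    have h3 : ((Int.gcdB c d : ℂ) * z - (Int.gcdA c d : ℂ)).re = (Int.gcdB c d : ℝ) * z.re - (Int.gcdA c d : ℝ) := by simp
    have h4 : ((c:ℂ) * z + (d:ℂ)).im = (c:ℝ) * z.im := by simp
    rw [h1, h2, h3, h4]
    have habs : (0:ℝ) < ‖(c:ℂ)*z+d‖ ^ 2 := by
      have := norm_pos_iff.mpr hw
      positivity
    field_simp
    nlinarith [hbez]
  rw [him]
  ring

lemma rP_pos {c d : ℤ} {z : ℂ} (h : (c:ℂ) * z + d ≠ 0) (α : ℝ) : 0 < rP α c d z := by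
  have := norm_pos_iff.mpr h
  exact div_pos (Real.exp_pos _) this

lemma rP_shift (α β : ℝ) (c d : ℤ) (z : ℂ) :
    rP β c d z = Real.exp (-(2*Real.pi)*(β-α)*
      (z.im / ‖(c:ℂ)*z + d‖ ^ 2)) * rP α c d z := by
  unfold rP
  rw [mul_div_assoc', ← Real.exp_add]
  congr 2
  ring

lemma rP_le_inv {β : ℝ} (hβ : 0 ≤ β) {z : ℂ} (hz : 0 ≤ z.im) (c d : ℤ) :
    rP β c d z ≤ 1 / ‖(c:ℂ)*z + d‖ := by
  unfold rP
  gcongr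
  · rw [← Real.exp_zero]
    apply Real.exp_le_exp.mpr
    apply div_nonpos_of_nonpos_of_nonneg _ (by positivity)
    have : 0 ≤ 2 * Real.pi * β * z.im := by positivity
    nlinarith

lemma summable_w : Summable (fun p : ℤ×ℤ => 1 / (max |(p.1:ℝ)| |(p.2:ℝ)|)^4) := by
  have hnat : Summable (fun n : ℕ => 2 * (1 / ((n:ℝ)+1)^2)) := by
    have h1 : Summable (fun n : ℕ => 1 / ((n:ℝ)+1)^2) := by
      have := (summable_nat_add_iff (f := fun n : ℕ => 1 / (n:ℝ)^2) 1).mpr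
        (Real.summable_one_div_nat_pow.mpr one_lt_two)
      refine this.congr fun n => by push_cast; ring_nf
    exact h1.mul_left 2
  have hNat : Summable (fun n : ℕ => 1 / ((n:ℝ)^2+1)) := by
    apply Summable.of_nonneg_of_le (fun n => by positivity) (fun n => ?_) hnat
    rw [mul_one_div, div_le_div_iff₀ (by positivity) (by positivity)]
    nlinarith [sq_nonneg ((n:ℝ) - 1)]
  have hZ : Summable (fun n : ℤ => 1 / ((n:ℝ)^2+1)) := by
    apply Summable.of_nat_of_neg
    · exact hNat.congr fun n => by norm_num
    · exact hNat.congr fun n => by push_cast; ring_nf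
  have hprod : Summable (fun p : ℤ×ℤ => 4 * ((1/((p.1:ℝ)^2+1)) * (1/((p.2:ℝ)^2+1)))) :=
    (hZ.mul_of_nonneg hZ (fun n => by positivity) (fun n => by positivity)).mul_left 4
  apply Summable.of_nonneg_of_le (fun p => by positivity) (fun p => ?_) hprod
  rcases eq_or_ne p (0,0) with rfl | hp
  · norm_num
  · have hne : ¬(p.1 = 0 ∧ p.2 = 0) := by
      rintro ⟨h1, h2⟩; exact hp (Prod.ext h1 h2)
    have h1 : (1:ℝ) ≤ max |(p.1:ℝ)| |(p.2:ℝ)| := by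
      rcases not_and_or.mp hne with h | h
      · refine le_trans ?_ (le_max_left _ _)
        rw [← Int.cast_abs]; exact_mod_cast Int.one_le_abs (by omega)
      · refine le_trans ?_ (le_max_right _ _)
        rw [← Int.cast_abs]; exact_mod_cast Int.one_le_abs (by omega)
    set M := max |(p.1:ℝ)| |(p.2:ℝ)| with hM
    have hc : |(p.1:ℝ)| ≤ M := le_max_left _ _
    have hd : |(p.2:ℝ)| ≤ M := le_max_right _ _
    have hMpos : (0:ℝ) < M := lt_of_lt_of_le one_pos h1
    rw [div_le_iff₀ (by positivity)]
    have key : ((p.1:ℝ)^2+1) * ((p.2:ℝ)^2+1) ≤ 4 * M^4 := by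
      have e1 : (p.1:ℝ)^2 ≤ M^2 := by
        rw [← sq_abs]; exact pow_le_pow_left₀ (abs_nonneg _) hc 2
      have e2 : (p.2:ℝ)^2 ≤ M^2 := by
        rw [← sq_abs]; exact pow_le_pow_left₀ (abs_nonneg _) hd 2
      have e3 : (1:ℝ) ≤ M^2 := by nlinarith
      nlinarith
    have hp1 : (0:ℝ) < (p.1:ℝ)^2+1 := by positivity
    have hp2 : (0:ℝ) < (p.2:ℝ)^2+1 := by positivity
    calc (1:ℝ) = (((p.1:ℝ)^2+1) * ((p.2:ℝ)^2+1)) * ((1/((p.1:ℝ)^2+1)) * (1/((p.2:ℝ)^2+1))) := by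
          field_simp
    _ ≤ (4 * M^4) * ((1/((p.1:ℝ)^2+1)) * (1/((p.2:ℝ)^2+1))) := by
          apply mul_le_mul_of_nonneg_right key (by positivity)
    _ = M^4 * (4 * ((1/((p.1:ℝ)^2+1)) * (1/((p.2:ℝ)^2+1)))) := by ring
    _ = 4 * ((1/((p.1:ℝ)^2+1)) * (1/((p.2:ℝ)^2+1))) * M^4 := by ring

lemma rP_pow (β : ℝ) (c d : ℤ) (z : ℂ) (kk : ℕ) :
    rP β c d z ^ kk = Real.exp (-2 * Real.pi * (kk * β) * z.im /
      ‖(c:ℂ)*z + d‖ ^ 2) / ‖(c:ℂ)*z + d‖ ^ kk := by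
  unfold rP
  rw [div_pow, ← Real.exp_nat_mul]
  congr 2
  ring

lemma denom_lower {z : ℂ} {y0 Z : ℝ} (hy0 : 0 < y0) (hy : y0 ≤ z.im)
    (hZ : ‖z‖ ≤ Z) (c d : ℤ) :
    min 1 (min y0 (y0/(y0+Z))) * max |(c:ℝ)| |(d:ℝ)| ≤ ‖(c:ℂ)*z + d‖ := by
  set q := ‖(c:ℂ)*z + d‖ with hq
  have hZ0 : 0 ≤ Z := le_trans (norm_nonneg z) hZ
  have hyZ : 0 < y0 + Z := by linarith
  have him : ((c:ℂ)*z + (d:ℂ)).im = (c:ℝ) * z.im := by simp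
  have hb1 : y0 * |(c:ℝ)| ≤ q := by
    have := Complex.abs_im_le_norm ((c:ℂ)*z + d)
    rw [him, abs_mul] at this
    calc y0 * |(c:ℝ)| ≤ |z.im| * |(c:ℝ)| := by
          apply mul_le_mul_of_nonneg_right _ (abs_nonneg _)
          rw [abs_of_pos (lt_of_lt_of_le hy0 hy)]; exact hy
    _ = |(c:ℝ)| * |z.im| := by ring
    _ ≤ q := this
  have hb2 : (y0/(y0+Z)) * |(d:ℝ)| ≤ q := by
    have hd : |(d:ℝ)| ≤ q + |(c:ℝ)| * Z := by
      have h1 := norm_add_le ((c:ℂ)*z + d) (-((c:ℂ)*z))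
      have e : ((c:ℂ)*z + d) + (-((c:ℂ)*z)) = (d:ℂ) := by ring
      rw [e, norm_neg, norm_mul] at h1
      have e2 : ‖(d:ℂ)‖ = |(d:ℝ)| := by
        rw [Complex.norm_intCast]
      have e3 : ‖(c:ℂ)‖ = |(c:ℝ)| := by
        rw [Complex.norm_intCast]
      rw [e2, e3] at h1
      have h2 : |(c:ℝ)| * ‖z‖ ≤ |(c:ℝ)| * Z :=
        mul_le_mul_of_nonneg_left hZ (abs_nonneg _)
      rw [hq]; linarith
    have hcq : |(c:ℝ)| ≤ q / y0 := by
      rw [le_div_iff₀ hy0]; linarith [hb1]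
    have hq0 : 0 ≤ q := norm_nonneg _
    have hdd : |(d:ℝ)| ≤ q * (y0 + Z) / y0 := by
      have : |(d:ℝ)| ≤ q + (q/y0) * Z := by nlinarith [hcq, hZ0]
      have e4 : q * (y0 + Z) / y0 = q + (q/y0)*Z := by field_simp
      rw [e4]; exact this
    rw [div_mul_eq_mul_div, div_le_iff₀ hyZ]
    have := mul_le_mul_of_nonneg_left hdd (le_of_lt hy0)
    have e5 : y0 * (q * (y0+Z)/y0) = q * (y0 + Z) := by field_simp
    linarith [e5 ▸ this]
  rcases le_total |(d:ℝ)| |(c:ℝ)| with hcd | hcd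
  · rw [max_eq_left hcd]
    have h3 : min 1 (min y0 (y0/(y0+Z))) ≤ y0 :=
      le_trans (min_le_right _ _) (min_le_left _ _)
    exact le_trans (mul_le_mul_of_nonneg_right h3 (abs_nonneg _)) hb1
  · rw [max_eq_right hcd]
    have h3 : min 1 (min y0 (y0/(y0+Z))) ≤ y0/(y0+Z) :=
      le_trans (min_le_right _ _) (min_le_right _ _)
    exact le_trans (mul_le_mul_of_nonneg_right h3 (abs_nonneg _)) hb2

lemma rP_continuousOn (α : ℝ) (c d : ℤ) (h : ¬(c = 0 ∧ d = 0)) :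
    ContinuousOn (rP α c d) {z : ℂ | 0 < z.im} := by
  have hne : ∀ z ∈ {z : ℂ | 0 < z.im}, ‖(c:ℂ)*z + d‖ ≠ 0 := by
    intro z hz
    rw [ne_eq, norm_eq_zero]
    intro h0
    have him : ((c:ℂ)*z + (d:ℂ)).im = (c:ℝ) * z.im := by simp
    rcases eq_or_ne c 0 with hc | hc
    · subst hc
      simp only [Int.cast_zero, zero_mul, zero_add] at h0
      exact h ⟨rfl, by exact_mod_cast h0⟩
    · have h1 : (c:ℝ) * z.im = 0 := by rw [← him, h0, Complex.zero_im]
      rcases mul_eq_zero.mp h1 with h2 | h2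
      · exact (Int.cast_ne_zero.mpr hc) h2
      · exact (ne_of_gt hz) h2
  have hqc : Continuous fun z : ℂ => ‖(c:ℂ)*z + d‖ :=
    continuous_norm.comp ((continuous_const.mul continuous_id).add continuous_const)
  apply ContinuousOn.div
  · apply Real.continuous_exp.comp_continuousOn
    apply ContinuousOn.div
    · exact ((continuous_const.mul Complex.continuous_im)).continuousOn
    · exact (hqc.pow 2).continuousOn
    · intro z hz; exact pow_ne_zero 2 (hne z hz)
  · exact hqc.continuousOn
  · exact hne

lemma one_le_M {p : ℤ × ℤ} (h : ¬(p.1 = 0 ∧ p.2 = 0)) :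
    (1:ℝ) ≤ max |(p.1:ℝ)| |(p.2:ℝ)| := by
  rcases not_and_or.mp h with h | h
  · refine le_trans ?_ (le_max_left _ _)
    rw [← Int.cast_abs]; exact_mod_cast Int.one_le_abs (by omega)
  · refine le_trans ?_ (le_max_right _ _)
    rw [← Int.cast_abs]; exact_mod_cast Int.one_le_abs (by omega)

lemma abs_sigmaP_rP {c d : ℤ} (h : IsCoprime c d) {kk mm : ℕ} (hkk : kk ≠ 0) {z : ℂ}
    (hz : 0 < z.im) :
    ‖sigmaP kk mm c d z‖ = rP ((mm:ℝ)/(kk:ℝ)) c d z ^ kk := by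
  rw [abs_sigmaP h kk mm hz, rP_pow]
  have : (kk:ℝ) * ((mm:ℝ)/(kk:ℝ)) = (mm:ℝ) := by
    field_simp
  rw [this]

lemma Pset_coprime {p : ℤ × ℤ} (hp : p ∈ Pset) : IsCoprime p.1 p.2 := by
  rcases hp with ⟨h, _⟩ | h
  · exact h
  · rw [h]; exact isCoprime_zero_left.mpr isUnit_one

lemma Pset_ne_zero {p : ℤ × ℤ} (hp : p ∈ Pset) : ¬(p.1 = 0 ∧ p.2 = 0) := by
  rintro ⟨h1, h2⟩
  exact not_isCoprime_zero_zero (h1 ▸ h2 ▸ Pset_coprime hp)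


/-- if `r_{c_m,d_m}` is strictly maximal on a nonempty compact `C ⊆ ℱ`, then
`sup_{z∈C} |P_n(z)/σ⁽ⁿ⁾_{c_m,d_m}(z) - 1| → 0`, and in particular `P_n` is eventually
nonvanishing on `C`. -/
theorem poincare_dominant_term (α : ℝ) (hα : 0 < α)
    (k m : ℕ → ℕ) (hke : ∀ n, Even (k n)) (hk4 : ∀ n, 4 ≤ k n)
    (hki : Tendsto k atTop atTop)
    (hm : Tendsto (fun n => (m n : ℝ) / (k n : ℝ)) atTop (nhds α))
    (C : Set ℂ) (hCF : C ⊆ Fdom) (hCne : C.Nonempty) (hCc : IsCompact C)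
    (cm dm : ℤ) (hcm : (cm, dm) ∈ Pset)
    (hr : ∀ p ∈ Pset, p ≠ (cm, dm) → ∀ z ∈ C, rP α p.1 p.2 z < rP α cm dm z) :
    (∀ ε : ℝ, 0 < ε → ∀ᶠ n in atTop, ∀ z ∈ C,
      ‖poincareP (k n) (m n) z / sigmaP (k n) (m n) cm dm z - 1‖ ≤ ε) ∧
    (∃ N : ℕ, ∀ n ≥ N, ∀ z ∈ C, poincareP (k n) (m n) z ≠ 0) := by
  classical
  -- basic facts about C
  have him_pos : ∀ z ∈ C, 0 < z.im := fun z hz => (hCF hz).1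
  have hCsub : C ⊆ {z : ℂ | 0 < z.im} := him_pos
  -- min of im
  obtain ⟨z0, hz0C, hz0min⟩ := hCc.exists_isMinOn hCne Complex.continuous_im.continuousOn
  set y0 : ℝ := z0.im with hy0def
  have hy0pos : 0 < y0 := him_pos z0 hz0C
  have hy0 : ∀ z ∈ C, y0 ≤ z.im := fun z hz => isMinOn_iff.mp hz0min z hz
  -- max of im
  obtain ⟨z1, hz1C, hz1max⟩ := hCc.exists_isMaxOn hCne Complex.continuous_im.continuousOn
  set Y : ℝ := z1.im with hYdef
  have hY : ∀ z ∈ C, z.im ≤ Y := fun z hz => isMaxOn_iff.mp hz1max z hz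
  have hYpos : 0 < Y := him_pos z1 hz1C
  -- max of abs
  obtain ⟨z2, hz2C, hz2max⟩ := hCc.exists_isMaxOn hCne continuous_norm.continuousOn
  set Z : ℝ := ‖z2‖ with hZdef
  have hZ : ∀ z ∈ C, ‖z‖ ≤ Z := fun z hz => isMaxOn_iff.mp hz2max z hz
  have hZ0 : 0 ≤ Z := norm_nonneg _
  -- delta
  set δ : ℝ := min 1 (min y0 (y0 / (y0 + Z))) with hδdef
  have hδpos : 0 < δ := by
    apply lt_min one_pos
    apply lt_min hy0pos
    apply div_pos hy0pos (by linarith)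
  have hδ1 : δ ≤ 1 := min_le_left _ _
  have hδlow : ∀ z ∈ C, ∀ c d : ℤ,
      δ * max |(c:ℝ)| |(d:ℝ)| ≤ ‖(c:ℂ)*z + d‖ := by
    intro z hz c d
    exact denom_lower hy0pos (hy0 z hz) (hZ z hz) c d
  -- notation
  set Mr : ℤ × ℤ → ℝ := fun p => max |(p.1:ℝ)| |(p.2:ℝ)| with hMrdef
  have hMr1 : ∀ p ∈ Pset, (1:ℝ) ≤ Mr p := fun p hp => one_le_M (Pset_ne_zero hp)
  have hqlow : ∀ z ∈ C, ∀ p ∈ Pset, δ * Mr p ≤ ‖(p.1:ℂ)*z + p.2‖ :=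
    fun z hz p _ => hδlow z hz p.1 p.2
  have hqδ : ∀ z ∈ C, ∀ p ∈ Pset, δ ≤ ‖(p.1:ℂ)*z + p.2‖ := by
    intro z hz p hp
    calc δ = δ * 1 := by ring
    _ ≤ δ * Mr p := by
        apply mul_le_mul_of_nonneg_left (hMr1 p hp) hδpos.le
    _ ≤ _ := hqlow z hz p hp
  have hqpos : ∀ z ∈ C, ∀ p ∈ Pset, (0:ℝ) < ‖(p.1:ℂ)*z + p.2‖ :=
    fun z hz p hp => lt_of_lt_of_le hδpos (hqδ z hz p hp)
  -- bound on E_p = im z / q^2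
  set B0 : ℝ := Y / δ^2 with hB0def
  have hB0pos : 0 < B0 := div_pos hYpos (by positivity)
  have hE : ∀ z ∈ C, ∀ p ∈ Pset,
      z.im / ‖(p.1:ℂ)*z + p.2‖ ^ 2 ≤ B0 := by
    intro z hz p hp
    apply div_le_div₀ hYpos.le (hY z hz) (by positivity)
    exact pow_le_pow_left₀ hδpos.le (hqδ z hz p hp) 2
  have hE0 : ∀ z ∈ C, ∀ p : ℤ × ℤ,
      0 ≤ z.im / ‖(p.1:ℂ)*z + p.2‖ ^ 2 := by
    intro z hz p
    apply div_nonneg (him_pos z hz).le (by positivity)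
  -- Q : max of q_pm over C
  have hqmc : Continuous fun z : ℂ => ‖(cm:ℂ)*z + dm‖ :=
    continuous_norm.comp ((continuous_const.mul continuous_id).add continuous_const)
  obtain ⟨z3, hz3C, hz3max⟩ := hCc.exists_isMaxOn hCne hqmc.continuousOn
  set Q : ℝ := ‖(cm:ℂ)*z3 + dm‖ with hQdef
  have hQ : ∀ z ∈ C, ‖(cm:ℂ)*z + dm‖ ≤ Q := fun z hz => isMaxOn_iff.mp hz3max z hz
  have hQpos : 0 < Q := hqpos z3 hz3C (cm, dm) hcm
  -- lower bound RL for rP β cm dm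
  set EL : ℝ := Real.exp (-(2*Real.pi) * (α+1) * B0) with hELdef
  have hELpos : 0 < EL := Real.exp_pos _
  set RL : ℝ := EL / Q with hRLdef
  have hRLpos : 0 < RL := div_pos hELpos hQpos
  have hRL : ∀ z ∈ C, ∀ β : ℝ, 0 ≤ β → β ≤ α + 1 → RL ≤ rP β cm dm z := by
    intro z hz β hβ0 hβ1
    rw [rP, hRLdef, hELdef]
    have hq := hqpos z hz (cm, dm) hcm
    apply div_le_div₀ (Real.exp_pos _).le _ hq (hQ z hz)
    apply Real.exp_le_exp.mpr
    have h1 : β * (z.im / ‖(cm:ℂ)*z + dm‖ ^ 2) ≤ (α+1) * B0 := by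
      apply mul_le_mul hβ1 (hE z hz (cm,dm) hcm) (hE0 z hz (cm,dm)) (by linarith)
    have h2 : -2 * Real.pi * β * z.im / ‖(cm:ℂ)*z + dm‖ ^ 2
        = -(2*Real.pi) * (β * (z.im / ‖(cm:ℂ)*z + dm‖ ^ 2)) := by
      ring
    rw [h2]
    have hπ : 0 ≤ 2 * Real.pi := by positivity
    nlinarith [h1, hπ]
  set KK : ℝ := Q / EL with hKKdef
  have hKKpos : 0 < KK := div_pos hQpos hELpos
  have hKKRL : KK * RL = 1 := by
    rw [hKKdef, hRLdef]; field_simp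
  -- upper bound for rP β p
  have hup : ∀ z ∈ C, ∀ p ∈ Pset, ∀ β : ℝ, 0 ≤ β →
      rP β p.1 p.2 z ≤ 1 / (δ * Mr p) := by
    intro z hz p hp β hβ0
    refine (rP_le_inv hβ0 (him_pos z hz).le p.1 p.2).trans ?_
    apply one_div_le_one_div_of_le (mul_pos hδpos (lt_of_lt_of_le one_pos (hMr1 p hp))) (hqlow z hz p hp)
  -- per-pair strict ratio bound
  have hθp : ∀ p : ℤ × ℤ, ∃ t : ℝ, 0 < t ∧ t < 1 ∧ (p ∈ Pset → p ≠ (cm, dm) →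
      ∀ z ∈ C, rP α p.1 p.2 z ≤ t * rP α cm dm z) := by
    intro p
    by_cases hp : p ∈ Pset ∧ p ≠ (cm, dm)
    · obtain ⟨hp1, hp2⟩ := hp
      have hpm_ne0 : ∀ z ∈ C, (cm:ℂ)*z + dm ≠ 0 :=
        fun z hz => czd_ne_zero (Pset_ne_zero hcm) (him_pos z hz)
      have hp_ne0 : ∀ z ∈ C, (p.1:ℂ)*z + p.2 ≠ 0 :=
        fun z hz => czd_ne_zero (Pset_ne_zero hp1) (him_pos z hz)
      have hcont : ContinuousOn (fun z => rP α p.1 p.2 z / rP α cm dm z) C := by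
        apply ContinuousOn.div
        · exact (rP_continuousOn α p.1 p.2 (Pset_ne_zero hp1)).mono hCsub
        · exact (rP_continuousOn α cm dm (Pset_ne_zero hcm)).mono hCsub
        · intro z hz; exact (rP_pos (hpm_ne0 z hz) α).ne'
      obtain ⟨zx, hzxC, hzxmax⟩ := hCc.exists_isMaxOn hCne hcont
      refine ⟨rP α p.1 p.2 zx / rP α cm dm zx, ?_, ?_, ?_⟩
      · exact div_pos (rP_pos (hp_ne0 zx hzxC) α) (rP_pos (hpm_ne0 zx hzxC) α)
      · rw [div_lt_one (rP_pos (hpm_ne0 zx hzxC) α)]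
        exact hr p hp1 hp2 zx hzxC
      · intro _ _ z hz
        have h1 : rP α p.1 p.2 z / rP α cm dm z ≤ rP α p.1 p.2 zx / rP α cm dm zx :=
          isMaxOn_iff.mp hzxmax z hz
        have h2 : 0 < rP α cm dm z := rP_pos (hpm_ne0 z hz) α
        calc rP α p.1 p.2 z = (rP α p.1 p.2 z / rP α cm dm z) * rP α cm dm z := by
              field_simp
        _ ≤ (rP α p.1 p.2 zx / rP α cm dm zx) * rP α cm dm z :=
              mul_le_mul_of_nonneg_right h1 h2.le
    · exact ⟨1/2, by norm_num, by norm_num, fun h1 h2 => absurd ⟨h1, h2⟩ hp⟩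
  choose tf htf0 htf1 htfB using hθp
  -- finite critical set
  set NN : ℤ := max ⌈2 * KK / δ⌉ 1 with hNNdef
  have hNN1 : (1:ℝ) ≤ (NN:ℝ) := by exact_mod_cast le_max_right ⌈2 * KK / δ⌉ 1
  have hNNT : 2 * KK / δ ≤ (NN:ℝ) := by
    refine (Int.le_ceil _).trans ?_
    exact_mod_cast le_max_left ⌈2 * KK / δ⌉ 1
  set SS : Set (ℤ × ℤ) := {p | |p.1| ≤ NN ∧ |p.2| ≤ NN} with hSSdef
  have hSSfin : SS.Finite := by
    apply Set.Finite.subset ((Set.finite_Icc (-NN) NN).prod (Set.finite_Icc (-NN) NN))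
    rintro p ⟨h1, h2⟩
    exact ⟨Set.mem_Icc.mpr (abs_le.mp h1), Set.mem_Icc.mpr (abs_le.mp h2)⟩
  set crit : Set (ℤ × ℤ) := {p | p ∈ SS ∧ p ∈ Pset ∧ p ≠ (cm, dm)} with hcritdef
  have hcritfin : crit.Finite := hSSfin.subset (fun p hp => hp.1)
  -- uniform theta
  set F : Finset (ℤ × ℤ) := hcritfin.toFinset with hFdef
  set θ : ℝ := if hF : F.Nonempty then F.sup' hF tf else 1/2 with hθdef
  have hθ0 : 0 < θ := by
    rw [hθdef]
    split_ifs with hF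
    · obtain ⟨p, hp⟩ := hF
      exact lt_of_lt_of_le (htf0 p) (Finset.le_sup' tf hp)
    · norm_num
  have hθ1 : θ < 1 := by
    rw [hθdef]
    split_ifs with hF
    · exact (Finset.sup'_lt_iff hF).mpr (fun p _ => htf1 p)
    · norm_num
  have hθB : ∀ p ∈ crit, ∀ z ∈ C, rP α p.1 p.2 z ≤ θ * rP α cm dm z := by
    intro p hp z hz
    have hpF : p ∈ F := hcritfin.mem_toFinset.mpr hp
    have h1 : tf p ≤ θ := by
      rw [hθdef]
      split_ifs with hF
      · exact Finset.le_sup' tf hpF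
      · exact absurd ⟨p, hpF⟩ hF
    have hpm_ne0 : (cm:ℂ)*z + dm ≠ 0 := czd_ne_zero (Pset_ne_zero hcm) (him_pos z hz)
    calc rP α p.1 p.2 z ≤ tf p * rP α cm dm z := htfB p hp.2.1 hp.2.2 z hz
    _ ≤ θ * rP α cm dm z := mul_le_mul_of_nonneg_right h1 (rP_pos hpm_ne0 α).le
  set θ' : ℝ := (1 + θ)/2 with hθ'def
  have hθ'0 : 0 < θ' := by rw [hθ'def]; linarith
  have hθ'1 : θ' < 1 := by rw [hθ'def]; linarith
  have hθθ' : θ < θ' := by rw [hθ'def]; linarith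
  -- eta
  set η : ℝ := Real.log (θ'/θ) / (4 * Real.pi * B0 + 1) with hηdef
  have hlogpos : 0 < Real.log (θ'/θ) := Real.log_pos ((one_lt_div hθ0).mpr hθθ')
  have hden : 0 < 4 * Real.pi * B0 + 1 := by positivity
  have hηpos : 0 < η := div_pos hlogpos hden
  -- perturbation lemma
  have hpert : ∀ β : ℝ, |β - α| ≤ η → ∀ p ∈ crit, ∀ z ∈ C,
      rP β p.1 p.2 z ≤ θ' * rP β cm dm z := by
    intro β hβη p hp z hz
    have hzC := hz
    set Ep := z.im / ‖(p.1:ℂ)*z + p.2‖ ^ 2 with hEpdef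
    set Em := z.im / ‖(cm:ℂ)*z + dm‖ ^ 2 with hEmdef
    have hEple : Ep ≤ B0 := hE z hz p hp.2.1
    have hEp0 : 0 ≤ Ep := hE0 z hz p
    have hEmle : Em ≤ B0 := hE z hz (cm, dm) hcm
    have hEm0 : 0 ≤ Em := hE0 z hz (cm, dm)
    have hpm_ne0 : (cm:ℂ)*z + dm ≠ 0 := czd_ne_zero (Pset_ne_zero hcm) (him_pos z hz)
    have habs : |(-(2*Real.pi)*(β-α)*Ep)| + |(2*Real.pi)*(β-α)*Em| ≤ 4*Real.pi*B0*η := by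
      rw [abs_mul, abs_mul, abs_mul, abs_mul]
      have e1 : |(-(2*Real.pi))| = 2*Real.pi := by
        rw [abs_neg, abs_of_pos (by positivity)]
      have e2 : |(2*Real.pi)| = 2*Real.pi := abs_of_pos (by positivity)
      rw [e1, e2, abs_of_nonneg hEp0, abs_of_nonneg hEm0]
      have hη0 : 0 ≤ η := hηpos.le
      have s1 : |β - α| * Ep ≤ η * B0 := mul_le_mul hβη hEple hEp0 hη0
      have s2 : |β - α| * Em ≤ η * B0 := mul_le_mul hβη hEmle hEm0 hη0
      have hπ0 : (0:ℝ) ≤ 2*Real.pi := by positivity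
      have t1 : 2*Real.pi * (|β - α| * Ep) ≤ 2*Real.pi * (η * B0) :=
        mul_le_mul_of_nonneg_left s1 hπ0
      have t2 : 2*Real.pi * (|β - α| * Em) ≤ 2*Real.pi * (η * B0) :=
        mul_le_mul_of_nonneg_left s2 hπ0
      have t3 := add_le_add t1 t2
      ring_nf at t3 ⊢
      linarith [t3]
    -- rP β p z = exp(-(2π)(β-α)Ep) * rP α p z
    have e3 : rP β p.1 p.2 z = Real.exp (-(2*Real.pi)*(β-α)*Ep) * rP α p.1 p.2 z :=
      rP_shift α β p.1 p.2 z
    have e4 : rP α cm dm z = Real.exp ((2*Real.pi)*(β-α)*Em) * rP β cm dm z := by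
      have := rP_shift β α cm dm z
      rw [this]
      have : -(2*Real.pi)*(α-β)*Em = (2*Real.pi)*(β-α)*Em := by ring
      rw [this]
    have hexp : Real.exp (-(2*Real.pi)*(β-α)*Ep) * Real.exp ((2*Real.pi)*(β-α)*Em)
        ≤ θ'/θ := by
      rw [← Real.exp_add]
      have h5 : -(2*Real.pi)*(β-α)*Ep + (2*Real.pi)*(β-α)*Em ≤ 4*Real.pi*B0*η := by
        calc -(2*Real.pi)*(β-α)*Ep + (2*Real.pi)*(β-α)*Em
            ≤ |(-(2*Real.pi)*(β-α)*Ep)| + |(2*Real.pi)*(β-α)*Em| :=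
              add_le_add (le_abs_self _) (le_abs_self _)
        _ ≤ 4*Real.pi*B0*η := habs
      have h6 : 4*Real.pi*B0*η ≤ Real.log (θ'/θ) := by
        have h7 : (4*Real.pi*B0+1) * η = Real.log (θ'/θ) := by
          rw [hηdef, mul_div_cancel₀ _ hden.ne']
        calc 4*Real.pi*B0*η ≤ (4*Real.pi*B0+1)*η :=
              mul_le_mul_of_nonneg_right (by linarith) hηpos.le
        _ = _ := h7
      calc Real.exp (-(2*Real.pi)*(β-α)*Ep + (2*Real.pi)*(β-α)*Em)
          ≤ Real.exp (Real.log (θ'/θ)) := Real.exp_le_exp.mpr (h5.trans h6)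
      _ = θ'/θ := Real.exp_log (div_pos hθ'0 hθ0)
    have hrpm : 0 ≤ rP β cm dm z := (rP_pos hpm_ne0 β).le
    calc rP β p.1 p.2 z = Real.exp (-(2*Real.pi)*(β-α)*Ep) * rP α p.1 p.2 z := e3
    _ ≤ Real.exp (-(2*Real.pi)*(β-α)*Ep) * (θ * rP α cm dm z) := by
        apply mul_le_mul_of_nonneg_left (hθB p hp z hz) (Real.exp_pos _).le
    _ = (Real.exp (-(2*Real.pi)*(β-α)*Ep) * Real.exp ((2*Real.pi)*(β-α)*Em)) *
          θ * rP β cm dm z := by rw [e4]; ring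
    _ ≤ (θ'/θ) * θ * rP β cm dm z := by
        apply mul_le_mul_of_nonneg_right _ hrpm
        exact mul_le_mul_of_nonneg_right hexp hθ0.le
    _ = θ' * rP β cm dm z := by field_simp
  -- B sequence
  set Bfun : ℕ → ℝ := fun n => θ'^(k n) * (NN:ℝ)^4 + (KK/δ)^4 * 16 * (1/2:ℝ)^(k n)
    with hBfundef
  -- master per-term bound
  have master : ∀ n : ℕ, |(m n:ℝ)/(k n:ℝ) - α| ≤ η → ((m n:ℝ)/(k n:ℝ)) ≤ α + 1 →
      ∀ z ∈ C, ∀ p : ℤ × ℤ, p ∈ Pset → p ≠ (cm, dm) →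
      ‖sigmaP (k n) (m n) p.1 p.2 z‖ ≤
        Bfun n * (1/(Mr p)^4) * ‖sigmaP (k n) (m n) cm dm z‖ := by
    intro n hβη hβ1 z hz p hp hpne
    have hkn0 : k n ≠ 0 := by have := hk4 n; omega
    set β : ℝ := (m n:ℝ)/(k n:ℝ) with hβdef
    have hβ0 : 0 ≤ β := by positivity
    have habs1 : ‖sigmaP (k n) (m n) p.1 p.2 z‖ = rP β p.1 p.2 z ^ (k n) :=
      abs_sigmaP_rP (Pset_coprime hp) hkn0 (him_pos z hz)
    have habs2 : ‖sigmaP (k n) (m n) cm dm z‖ = rP β cm dm z ^ (k n) :=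
      abs_sigmaP_rP (Pset_coprime hcm) hkn0 (him_pos z hz)
    have hp_ne0 : (p.1:ℂ)*z + p.2 ≠ 0 := czd_ne_zero (Pset_ne_zero hp) (him_pos z hz)
    have hpm_ne0 : (cm:ℂ)*z + dm ≠ 0 := czd_ne_zero (Pset_ne_zero hcm) (him_pos z hz)
    have hrp0 : 0 ≤ rP β p.1 p.2 z := (rP_pos hp_ne0 β).le
    have hrm0 : 0 ≤ rP β cm dm z := (rP_pos hpm_ne0 β).le
    have hrmk0 : 0 ≤ rP β cm dm z ^ (k n) := pow_nonneg hrm0 _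
    have hMrpos : (0:ℝ) < Mr p := lt_of_lt_of_le one_pos (hMr1 p hp)
    rw [habs1, habs2]
    by_cases hSS : p ∈ SS
    · -- finite critical part
      have hcr : p ∈ crit := ⟨hSS, hp, hpne⟩
      have h1 : rP β p.1 p.2 z ≤ θ' * rP β cm dm z := hpert β hβη p hcr z hz
      have h2 : rP β p.1 p.2 z ^ (k n) ≤ θ'^(k n) * rP β cm dm z ^ (k n) := by
        rw [← mul_pow]
        exact pow_le_pow_left₀ hrp0 h1 (k n)
      have hMrNN : Mr p ≤ (NN:ℝ) := by
        rw [hMrdef]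
        apply max_le
        · rw [← Int.cast_abs]; exact_mod_cast hSS.1
        · rw [← Int.cast_abs]; exact_mod_cast hSS.2
      have h9 : (1:ℝ) ≤ (NN:ℝ)^4 * (1/(Mr p)^4) := by
        rw [mul_one_div, le_div_iff₀ (by positivity)]
        rw [one_mul]
        exact pow_le_pow_left₀ hMrpos.le hMrNN 4
      have h10 : θ'^(k n) ≤ Bfun n * (1/(Mr p)^4) := by
        have ha : θ'^(k n) ≤ θ'^(k n) * ((NN:ℝ)^4 * (1/(Mr p)^4)) := by
          nth_rewrite 1 [← mul_one (θ'^(k n))]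
          exact mul_le_mul_of_nonneg_left h9 (by positivity)
        have hb : (0:ℝ) ≤ (KK/δ)^4 * 16 * (1/2:ℝ)^(k n) * (1/(Mr p)^4) := by positivity
        rw [hBfundef]
        calc θ'^(k n) ≤ θ'^(k n) * ((NN:ℝ)^4 * (1/(Mr p)^4)) := ha
        _ ≤ θ'^(k n) * ((NN:ℝ)^4 * (1/(Mr p)^4)) +
            (KK/δ)^4 * 16 * (1/2:ℝ)^(k n) * (1/(Mr p)^4) := le_add_of_nonneg_right hb
        _ = (θ'^(k n) * (NN:ℝ)^4 + (KK/δ)^4 * 16 * (1/2:ℝ)^(k n)) * (1/(Mr p)^4) := by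
            ring
      calc rP β p.1 p.2 z ^ (k n) ≤ θ'^(k n) * rP β cm dm z ^ (k n) := h2
      _ ≤ (Bfun n * (1/(Mr p)^4)) * rP β cm dm z ^ (k n) :=
          mul_le_mul_of_nonneg_right h10 hrmk0
      _ = Bfun n * (1/(Mr p)^4) * rP β cm dm z ^ (k n) := by ring
    · -- tail part
      have hMrbig : 2*KK/δ ≤ Mr p := by
        refine hNNT.trans ?_
        rw [hSSdef] at hSS
        rcases not_and_or.mp hSS with h | h
        · push_neg at h
          refine le_trans ?_ (le_max_left _ _)
          rw [← Int.cast_abs]; exact_mod_cast h.le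
        · push_neg at h
          refine le_trans ?_ (le_max_right _ _)
          rw [← Int.cast_abs]; exact_mod_cast h.le
      have hδM : 0 < δ * Mr p := mul_pos hδpos hMrpos
      have hone : 1 ≤ KK * rP β cm dm z := by
        have := hRL z hz β hβ0 hβ1
        calc (1:ℝ) = KK * RL := hKKRL.symm
        _ ≤ KK * rP β cm dm z := mul_le_mul_of_nonneg_left this hKKpos.le
      have hbase : rP β p.1 p.2 z ≤ (KK/(δ * Mr p)) * rP β cm dm z := by
        calc rP β p.1 p.2 z ≤ 1/(δ * Mr p) := hup z hz p hp β hβ0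
        _ = (1/(δ * Mr p)) * 1 := by ring
        _ ≤ (1/(δ * Mr p)) * (KK * rP β cm dm z) :=
            mul_le_mul_of_nonneg_left hone (by positivity)
        _ = (KK/(δ * Mr p)) * rP β cm dm z := by ring
      have hbase0 : (0:ℝ) ≤ KK/(δ * Mr p) := by positivity
      have hhalf : KK/(δ * Mr p) ≤ 1/2 := by
        rw [div_le_div_iff₀ hδM (by norm_num)]
        have h0 : (2*KK/δ) * δ ≤ Mr p * δ := mul_le_mul_of_nonneg_right hMrbig hδpos.le
        have he : (2*KK/δ) * δ = 2 * KK := div_mul_cancel₀ _ hδpos.ne'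
        rw [he] at h0
        linarith [h0]
      have h2 : rP β p.1 p.2 z ^ (k n) ≤ (KK/(δ * Mr p))^(k n) * rP β cm dm z ^ (k n) := by
        rw [← mul_pow]
        exact pow_le_pow_left₀ hrp0 hbase (k n)
      obtain ⟨j, hj⟩ : ∃ j, k n = 4 + j := ⟨k n - 4, by have := hk4 n; omega⟩
      have h3 : (KK/(δ * Mr p))^(k n) ≤ (KK/(δ * Mr p))^4 * (1/2:ℝ)^j := by
        rw [hj, pow_add]
        apply mul_le_mul_of_nonneg_left _ (by positivity)
        exact pow_le_pow_left₀ hbase0 hhalf j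
      have h4 : (1/2:ℝ)^j = 16 * (1/2:ℝ)^(k n) := by
        rw [hj, pow_add]; ring
      have h5 : (KK/(δ * Mr p))^4 = (KK/δ)^4 * (1/(Mr p)^4) := by
        have he5 : (KK/δ) * (1/(Mr p)) = KK/(δ * Mr p) := by
          rw [div_mul_div_comm, mul_one]
        rw [← he5, mul_pow, one_div_pow]
      have h6 : (KK/(δ * Mr p))^(k n) ≤ (KK/δ)^4 * 16 * (1/2:ℝ)^(k n) * (1/(Mr p)^4) := by
        calc (KK/(δ * Mr p))^(k n) ≤ (KK/(δ * Mr p))^4 * (1/2:ℝ)^j := h3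
        _ = (KK/δ)^4 * (1/(Mr p)^4) * (16 * (1/2:ℝ)^(k n)) := by rw [h5, h4]
        _ = (KK/δ)^4 * 16 * (1/2:ℝ)^(k n) * (1/(Mr p)^4) := by ring
      have h7 : (KK/δ)^4 * 16 * (1/2:ℝ)^(k n) * (1/(Mr p)^4) ≤ Bfun n * (1/(Mr p)^4) := by
        rw [hBfundef]
        have : (0:ℝ) ≤ θ'^(k n) * (NN:ℝ)^4 * (1/(Mr p)^4) := by positivity
        calc (KK/δ)^4 * 16 * (1/2:ℝ)^(k n) * (1/(Mr p)^4)
            ≤ θ'^(k n) * (NN:ℝ)^4 * (1/(Mr p)^4) +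
              (KK/δ)^4 * 16 * (1/2:ℝ)^(k n) * (1/(Mr p)^4) := le_add_of_nonneg_left this
        _ = (θ'^(k n) * (NN:ℝ)^4 + (KK/δ)^4 * 16 * (1/2:ℝ)^(k n)) * (1/(Mr p)^4) := by ring
      calc rP β p.1 p.2 z ^ (k n) ≤ (KK/(δ * Mr p))^(k n) * rP β cm dm z ^ (k n) := h2
      _ ≤ ((KK/δ)^4 * 16 * (1/2:ℝ)^(k n) * (1/(Mr p)^4)) * rP β cm dm z ^ (k n) :=
          mul_le_mul_of_nonneg_right h6 hrmk0
      _ ≤ (Bfun n * (1/(Mr p)^4)) * rP β cm dm z ^ (k n) :=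
          mul_le_mul_of_nonneg_right h7 hrmk0
  -- summability of norms
  have hsumnorm : ∀ n : ℕ, ∀ z ∈ C,
      Summable (fun p : ↥Pset => ‖sigmaP (k n) (m n) p.1.1 p.1.2 z‖) := by
    intro n z hz
    have hkn0 : k n ≠ 0 := by have := hk4 n; omega
    set β : ℝ := (m n:ℝ)/(k n:ℝ) with hβdef
    have hβ0 : 0 ≤ β := by positivity
    have hwsub : Summable (fun p : ↥Pset => 1/(Mr (p:ℤ×ℤ))^4) := summable_w.subtype Pset
    apply Summable.of_nonneg_of_le (fun p => norm_nonneg _) (fun p => ?_)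
      (hwsub.mul_left ((1/δ)^(k n)))
    have hp := p.2
    have habs1 : ‖sigmaP (k n) (m n) p.1.1 p.1.2 z‖ =
        rP β p.1.1 p.1.2 z ^ (k n) :=
      abs_sigmaP_rP (Pset_coprime hp) hkn0 (him_pos z hz)
    have hp_ne0 : ((p:ℤ×ℤ).1:ℂ)*z + (p:ℤ×ℤ).2 ≠ 0 :=
      czd_ne_zero (Pset_ne_zero hp) (him_pos z hz)
    have hMrpos : (0:ℝ) < Mr p := lt_of_lt_of_le one_pos (hMr1 _ hp)
    have hb1 : rP β p.1.1 p.1.2 z ^ (k n) ≤ (1/(δ * Mr (p:ℤ×ℤ)))^(k n) :=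
      pow_le_pow_left₀ (rP_pos hp_ne0 β).le (hup z hz p hp β hβ0) (k n)
    have hb2 : ((1:ℝ)/(δ * Mr (p:ℤ×ℤ)))^(k n) = (1/δ)^(k n) * (1/(Mr (p:ℤ×ℤ)))^(k n) := by
      rw [← mul_pow, div_mul_div_comm, one_mul]
    have hb3 : ((1:ℝ)/(Mr (p:ℤ×ℤ)))^(k n) ≤ (1/(Mr (p:ℤ×ℤ)))^4 := by
      apply pow_le_pow_of_le_one (by positivity) _ (hk4 n)
      rw [div_le_one hMrpos]
      exact hMr1 _ hp
    calc ‖sigmaP (k n) (m n) p.1.1 p.1.2 z‖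
        = rP β p.1.1 p.1.2 z ^ (k n) := habs1
    _ ≤ (1/(δ * Mr (p:ℤ×ℤ)))^(k n) := hb1
    _ = (1/δ)^(k n) * (1/(Mr (p:ℤ×ℤ)))^(k n) := hb2
    _ ≤ (1/δ)^(k n) * (1/(Mr (p:ℤ×ℤ)))^4 := by
        apply mul_le_mul_of_nonneg_left hb3 (by positivity)
    _ = (1/δ)^(k n) * (1/(Mr (p:ℤ×ℤ))^4) := by rw [one_div_pow (Mr (p:ℤ×ℤ)) 4]
  -- the sum U
  have hUsum : Summable (fun p : ↥Pset => 1/(Mr (p:ℤ×ℤ))^4) := summable_w.subtype Pset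
  set U : ℝ := ∑' p : ↥Pset, 1/(Mr (p:ℤ×ℤ))^4 with hUdef
  have hU0 : 0 ≤ U := tsum_nonneg (fun p => by positivity)
  -- Bfun tends to 0
  have hBt : Tendsto Bfun atTop (nhds 0) := by
    have ht1 : Tendsto (fun j : ℕ => θ'^j) atTop (nhds 0) :=
      tendsto_pow_atTop_nhds_zero_of_lt_one hθ'0.le hθ'1
    have ht2 : Tendsto (fun j : ℕ => (1/2:ℝ)^j) atTop (nhds 0) :=
      tendsto_pow_atTop_nhds_zero_of_lt_one (by norm_num) (by norm_num)
    have h1 : Tendsto (fun n => θ'^(k n) * (NN:ℝ)^4) atTop (nhds 0) := by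
      simpa using (ht1.comp hki).mul_const ((NN:ℝ)^4)
    have h2 : Tendsto (fun n => (KK/δ)^4 * 16 * (1/2:ℝ)^(k n)) atTop (nhds 0) := by
      simpa using (ht2.comp hki).const_mul ((KK/δ)^4 * 16)
    rw [hBfundef]
    simpa using h1.add h2
  -- first conclusion
  have part1 : ∀ ε : ℝ, 0 < ε → ∀ᶠ n in atTop, ∀ z ∈ C,
      ‖poincareP (k n) (m n) z / sigmaP (k n) (m n) cm dm z - 1‖ ≤ ε := by
    intro ε hε
    have hev1 : ∀ᶠ n in atTop, |(m n:ℝ)/(k n:ℝ) - α| < min η 1 := by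
      obtain ⟨N, hN⟩ := Metric.tendsto_atTop.mp hm (min η 1) (lt_min hηpos one_pos)
      filter_upwards [eventually_ge_atTop N] with n hn
      have := hN n hn
      rwa [Real.dist_eq] at this
    have hevB : ∀ᶠ n in atTop, Bfun n * U ≤ ε := by
      have := hBt.mul_const U
      rw [zero_mul] at this
      exact this.eventually (eventually_le_nhds hε)
    filter_upwards [hev1, hevB] with n hn1 hn2
    intro z hz
    have hkn0 : k n ≠ 0 := by have := hk4 n; omega
    set β : ℝ := (m n:ℝ)/(k n:ℝ) with hβdef
    have hβη : |β - α| ≤ η := (hn1.le).trans (min_le_left _ _)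
    have hβ1 : β ≤ α + 1 := by
      have := abs_le.mp ((hn1.le).trans (min_le_right _ _))
      linarith [this.2]
    have hβ0 : 0 ≤ β := by positivity
    set pm : ↥Pset := ⟨(cm, dm), hcm⟩ with hpmdef
    set f : ↥Pset → ℂ := fun p => sigmaP (k n) (m n) p.1.1 p.1.2 z with hfdef
    have hnorm : Summable (fun p : ↥Pset => ‖f p‖) := by
      refine (hsumnorm n z hz).congr fun p => ?_
      rfl
    have hsum : Summable f := hnorm.of_norm
    have hsplit := hsum.tsum_eq_add_tsum_ite pm
    have habs2 : ‖sigmaP (k n) (m n) cm dm z‖ = rP β cm dm z ^ (k n) :=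
      abs_sigmaP_rP (Pset_coprime hcm) hkn0 (him_pos z hz)
    have hpm_ne0 : (cm:ℂ)*z + dm ≠ 0 := czd_ne_zero (Pset_ne_zero hcm) (him_pos z hz)
    have hσpos : 0 < ‖sigmaP (k n) (m n) cm dm z‖ := by
      rw [habs2]
      exact pow_pos (rP_pos hpm_ne0 β) _
    have hσne : sigmaP (k n) (m n) cm dm z ≠ 0 := by
      intro h0
      rw [h0] at hσpos
      simp at hσpos
    have hsumite : Summable (fun p : ↥Pset => ‖if p = pm then 0 else f p‖) := by
      apply Summable.of_nonneg_of_le (fun p => norm_nonneg _) (fun p => ?_) hnorm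
      split_ifs with h
      · simp
      · exact le_refl _
    have htail : ‖∑' p : ↥Pset, if p = pm then 0 else f p‖ ≤
        Bfun n * U * ‖sigmaP (k n) (m n) cm dm z‖ := by
      have hperterm : ∀ p : ↥Pset, ‖if p = pm then 0 else f p‖ ≤
          (Bfun n * ‖sigmaP (k n) (m n) cm dm z‖) * (1/(Mr (p:ℤ×ℤ))^4) := by
        intro p
        split_ifs with h
        · simp only [norm_zero]
          have hBn0 : 0 ≤ Bfun n := by rw [hBfundef]; positivity
          positivity
        · have hpne : (p:ℤ×ℤ) ≠ (cm, dm) := by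
            intro hc
            exact h (Subtype.ext hc)
          calc ‖f p‖ ≤
              Bfun n * (1/(Mr (p:ℤ×ℤ))^4) * ‖sigmaP (k n) (m n) cm dm z‖ :=
                master n hβη hβ1 z hz (p:ℤ×ℤ) p.2 hpne
          _ = (Bfun n * ‖sigmaP (k n) (m n) cm dm z‖) * (1/(Mr (p:ℤ×ℤ))^4) := by
                ring
      calc ‖∑' p : ↥Pset, if p = pm then 0 else f p‖
          = ‖∑' p : ↥Pset, if p = pm then 0 else f p‖ := rfl
      _ ≤ ∑' p : ↥Pset, ‖if p = pm then 0 else f p‖ := norm_tsum_le_tsum_norm hsumite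
      _ ≤ ∑' p : ↥Pset, (Bfun n * ‖sigmaP (k n) (m n) cm dm z‖) *
            (1/(Mr (p:ℤ×ℤ))^4) :=
            Summable.tsum_le_tsum hperterm hsumite (hUsum.mul_left _)
      _ = (Bfun n * ‖sigmaP (k n) (m n) cm dm z‖) * U := by
            rw [tsum_mul_left]
      _ = Bfun n * U * ‖sigmaP (k n) (m n) cm dm z‖ := by ring
    have hdiff : poincareP (k n) (m n) z - sigmaP (k n) (m n) cm dm z =
        ∑' p : ↥Pset, if p = pm then 0 else f p := by
      rw [poincareP]
      rw [show (∑' p : ↥Pset, sigmaP (k n) (m n) p.1.1 p.1.2 z) = ∑' p, f p from rfl]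
      rw [hsplit]
      rw [show f pm = sigmaP (k n) (m n) cm dm z from rfl]
      ring
    calc ‖poincareP (k n) (m n) z / sigmaP (k n) (m n) cm dm z - 1‖
        = ‖(poincareP (k n) (m n) z - sigmaP (k n) (m n) cm dm z) /
            sigmaP (k n) (m n) cm dm z‖ := by rw [div_sub_one hσne]
    _ = ‖poincareP (k n) (m n) z - sigmaP (k n) (m n) cm dm z‖ /
          ‖sigmaP (k n) (m n) cm dm z‖ := by rw [norm_div]
    _ ≤ Bfun n * U := by
          rw [div_le_iff₀ hσpos, hdiff]
          exact htail
    _ ≤ ε := hn2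
  refine ⟨part1, ?_⟩
  obtain ⟨N, hN⟩ := eventually_atTop.mp (part1 (1/2) (by norm_num))
  refine ⟨N, fun n hn z hz hP0 => ?_⟩
  have := hN n hn z hz
  rw [hP0, zero_div, zero_sub] at this
  rw [norm_neg, norm_one] at this
  norm_num at this
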